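/- Let k be a field of characteristic zero with algebraic closure K, let f_1 ∈ k[x_1],...,f_n ∈ k[x_n] be nonconstant univariate polynomials, let I be the ideal they generate in k[x_1,...,x_n] and Ī the ideal they generate in K[x_1,...,x_n], and fix g ∈ k[x_1,...,x_n]. Then the residue class of g generates k[x_1,...,x_n]/I as a k-algebra if and only if the residue class of g generates K[x_1,...,x_n]/Ī as a K-algebra. -/

import Mathlib

open TensorProduct

/-- Faithfully flat descent of `⊤` for submodules over a field. -/
lemma aux_top_of_baseChange_top {k K A : Type*} [Field k] [Field K] [Algebra k K]
    [AddCommGroup A] [Module k A] (N : Submodule k A)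
    (h : N.baseChange K = ⊤) : N = ⊤ := by
  rw [← Submodule.Quotient.subsingleton_iff]
  have hker : N.baseChange K ≤ LinearMap.ker (N.mkQ.baseChange K) := by
    conv_lhs => rw [← Submodule.span_eq N]
    rw [Submodule.baseChange_span]
    rw [Submodule.span_le]
    rintro _ ⟨m, hm, rfl⟩
    simp only [SetLike.mem_coe, LinearMap.mem_ker, TensorProduct.mk_apply,
      LinearMap.baseChange_tmul]
    rw [show N.mkQ m = 0 from (Submodule.Quotient.mk_eq_zero N).2 hm, tmul_zero]
  have hsurj : Function.Surjective (N.mkQ.baseChange K) := by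
    intro x
    induction x using TensorProduct.induction_on with
    | zero => exact ⟨0, map_zero _⟩
    | tmul c m =>
      obtain ⟨a, rfl⟩ := N.mkQ_surjective m
      exact ⟨c ⊗ₜ a, rfl⟩
    | add x y hx hy =>
      obtain ⟨x', rfl⟩ := hx
      obtain ⟨y', rfl⟩ := hy
      exact ⟨x' + y', map_add _ _ _⟩
  have hsub : Subsingleton (K ⊗[k] (A ⧸ N)) := by
    refine subsingleton_iff_forall_eq 0 |>.2 fun x => ?_
    obtain ⟨y, rfl⟩ := hsurj x
    exact hker (h ▸ Submodule.mem_top)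
  exact Module.FaithfullyFlat.lTensor_reflects_triviality k K (A ⧸ N)

lemma aux_adjoin_tensor {k K A : Type*} [Field k] [Field K] [Algebra k K]
    [CommRing A] [Algebra k A] (a : A) :
    Subalgebra.toSubmodule (Algebra.adjoin K {((1 : K) ⊗ₜ[k] a : K ⊗[k] A)}) =
      (Subalgebra.toSubmodule (Algebra.adjoin k {a})).baseChange K := by
  rw [Algebra.adjoin_eq_span, Algebra.adjoin_eq_span, Submodule.baseChange_span]
  congr 1
  have h1 : ({((1 : K) ⊗ₜ[k] a : K ⊗[k] A)} : Set (K ⊗[k] A)) =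
      (Algebra.TensorProduct.includeRight : A →ₐ[k] K ⊗[k] A) '' {a} := by
    simp
  rw [h1, ← MonoidHom.map_mclosure, Submonoid.coe_map]
  apply Set.image_congr'
  intro x
  rfl

lemma aux_adjoin_top_iff {k K A : Type*} [Field k] [Field K] [Algebra k K]
    [CommRing A] [Algebra k A] (a : A) :
    Algebra.adjoin k {a} = ⊤ ↔
      Algebra.adjoin K {((1 : K) ⊗ₜ[k] a : K ⊗[k] A)} = ⊤ := by
  rw [← Algebra.toSubmodule_eq_top, ← Algebra.toSubmodule_eq_top, aux_adjoin_tensor]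
  constructor
  · intro h
    rw [h, Submodule.baseChange_top]
  · exact fun h => aux_top_of_baseChange_top _ h

set_option maxHeartbeats 1000000 in
set_option synthInstance.maxHeartbeats 200000 in
theorem stmt_9 (k K : Type*) [Field k] [CharZero k] [Field K] [Algebra k K]
    [IsAlgClosure k K] (n : ℕ)
    (f : Fin n → Polynomial k) (hf : ∀ i, 0 < (f i).natDegree)
    (I : Ideal (MvPolynomial (Fin n) k))
    (hI : I = Ideal.span (Set.range fun i => Polynomial.aeval (MvPolynomial.X i) (f i)))
    (J : Ideal (MvPolynomial (Fin n) K))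
    (hJ : J = Ideal.span (Set.range fun i =>
      Polynomial.aeval (MvPolynomial.X i) ((f i).map (algebraMap k K))))
    (g : MvPolynomial (Fin n) k) :
    Algebra.adjoin k {Ideal.Quotient.mk I g} = ⊤ ↔
      Algebra.adjoin K {Ideal.Quotient.mk J (MvPolynomial.map (algebraMap k K) g)} = ⊤ := by
  classical
  -- images of the generators
  have hgen : ∀ (p : Polynomial k) (i : Fin n),
      MvPolynomial.map (algebraMap k K) (Polynomial.aeval (MvPolynomial.X i) p)
        = Polynomial.aeval (MvPolynomial.X (R := K) i) (p.map (algebraMap k K)) := by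
    intro p i
    rw [Polynomial.aeval_def, Polynomial.aeval_def, Polynomial.hom_eval₂,
      Polynomial.eval₂_map]
    congr 1
    · ext c
      simp [MvPolynomial.algebraMap_eq]
    · simp
  have hJI : J = I.map (MvPolynomial.map (algebraMap k K) :
      MvPolynomial (Fin n) k →+* MvPolynomial (Fin n) K) := by
    rw [hI, hJ, Ideal.map_span, ← Set.range_comp]
    exact congrArg Ideal.span (congrArg Set.range (funext fun i => (hgen (f i) i).symm))
  set Q := MvPolynomial (Fin n) k ⧸ I
  -- the map between quotients
  let ψ : Q →ₐ[k] (MvPolynomial (Fin n) K ⧸ J) :=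
    Ideal.Quotient.liftₐ I ((Ideal.Quotient.mkₐ k J).comp
      (MvPolynomial.mapAlgHom (Algebra.ofId k K))) (fun a ha => by
        have hmem : MvPolynomial.map (algebraMap k K) a ∈ J :=
          hJI ▸ Ideal.mem_map_of_mem _ ha
        simpa [MvPolynomial.mapAlgHom_apply, Ideal.Quotient.mkₐ_eq_mk] using
          Ideal.Quotient.eq_zero_iff_mem.2 hmem)
  have hψ : ∀ p : MvPolynomial (Fin n) k,
      ψ (Ideal.Quotient.mk I p) = Ideal.Quotient.mk J (MvPolynomial.map (algebraMap k K) p) := by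
    intro p
    show Ideal.Quotient.liftₐ _ _ _ (Ideal.Quotient.mk I p) = _
    rw [Ideal.Quotient.liftₐ_apply]
    rfl
  -- the map from MvPolynomial K into the tensor product
  let Φ₀ : MvPolynomial (Fin n) K →ₐ[K] K ⊗[k] Q :=
    MvPolynomial.aeval (fun i => (1 : K) ⊗ₜ[k] Ideal.Quotient.mk I (MvPolynomial.X i))
  have hkey : ∀ p : MvPolynomial (Fin n) k,
      Φ₀ (MvPolynomial.map (algebraMap k K) p) = (1 : K) ⊗ₜ[k] Ideal.Quotient.mk I p := by
    intro p
    have h := MvPolynomial.algHom_ext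
      (f := (Φ₀.restrictScalars k).comp (MvPolynomial.mapAlgHom (Algebra.ofId k K)))
      (g := (Algebra.TensorProduct.includeRight).comp (Ideal.Quotient.mkₐ k I))
      (fun i => by
        show Φ₀ (MvPolynomial.map (algebraMap k K) (MvPolynomial.X i)) =
          (1 : K) ⊗ₜ[k] Ideal.Quotient.mk I (MvPolynomial.X i)
        rw [MvPolynomial.map_X]
        exact MvPolynomial.aeval_X _ i)
    exact DFunLike.congr_fun h p
  have hvanish : ∀ a ∈ J, Φ₀ a = 0 := by
    intro a ha
    rw [hJI] at ha
    have hle : I.map (MvPolynomial.map (algebraMap k K) :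
        MvPolynomial (Fin n) k →+* MvPolynomial (Fin n) K) ≤ RingHom.ker Φ₀.toRingHom :=
      Ideal.map_le_iff_le_comap.2 (fun p hp => by
        simp only [Ideal.mem_comap, RingHom.mem_ker, AlgHom.toRingHom_eq_coe,
          RingHom.coe_coe]
        rw [hkey p, Ideal.Quotient.eq_zero_iff_mem.2 hp, tmul_zero])
    exact hle ha
  let Φ : (MvPolynomial (Fin n) K ⧸ J) →ₐ[K] K ⊗[k] Q :=
    Ideal.Quotient.liftₐ J Φ₀ hvanish
  let Ψ : K ⊗[k] Q →ₐ[K] (MvPolynomial (Fin n) K ⧸ J) :=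
    Algebra.TensorProduct.lift (Algebra.ofId K _) ψ (fun _ _ => Commute.all _ _)
  have hΨΦ : Ψ.comp Φ = AlgHom.id K _ := by
    apply Ideal.Quotient.algHom_ext
    apply MvPolynomial.algHom_ext
    intro i
    have hX : (MvPolynomial.X i : MvPolynomial (Fin n) K) =
        MvPolynomial.map (algebraMap k K) (MvPolynomial.X i) := by simp
    simp only [AlgHom.comp_apply, Ideal.Quotient.mkₐ_eq_mk, AlgHom.id_apply]
    rw [show Φ (Ideal.Quotient.mk J (MvPolynomial.X i)) = Φ₀ (MvPolynomial.X i) by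
        rw [show Φ (Ideal.Quotient.mk J (MvPolynomial.X i)) = _ from
          Ideal.Quotient.liftₐ_apply _ _ _ _]
        rfl,
      hX, hkey]
    rw [show Ψ ((1 : K) ⊗ₜ[k] Ideal.Quotient.mk I (MvPolynomial.X i)) =
        (Algebra.ofId K _) 1 * ψ (Ideal.Quotient.mk I (MvPolynomial.X i)) from
        Algebra.TensorProduct.lift_tmul _ _ _ _ _]
    rw [map_one, one_mul, hψ]
  have hΦΨ : Φ.comp Ψ = AlgHom.id K _ := by
    apply Algebra.TensorProduct.ext
    · exact Subsingleton.elim _ _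
    · apply Ideal.Quotient.algHom_ext
      apply MvPolynomial.algHom_ext
      intro i
      show Φ (Ψ ((1 : K) ⊗ₜ[k] Ideal.Quotient.mk I (MvPolynomial.X i))) =
        (1 : K) ⊗ₜ[k] Ideal.Quotient.mk I (MvPolynomial.X i)
      rw [show Ψ ((1 : K) ⊗ₜ[k] Ideal.Quotient.mk I (MvPolynomial.X i)) =
          (Algebra.ofId K _) 1 * ψ (Ideal.Quotient.mk I (MvPolynomial.X i)) from
          Algebra.TensorProduct.lift_tmul _ _ _ _ _]
      rw [map_one, one_mul, hψ]
      rw [show Φ (Ideal.Quotient.mk J (MvPolynomial.map (algebraMap k K) (MvPolynomial.X i))) =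
          Φ₀ (MvPolynomial.map (algebraMap k K) (MvPolynomial.X i)) by
          rw [show Φ (Ideal.Quotient.mk J (MvPolynomial.map (algebraMap k K) (MvPolynomial.X i)))
            = _ from Ideal.Quotient.liftₐ_apply _ _ _ _]
          rfl, hkey]
  let E : K ⊗[k] Q ≃ₐ[K] (MvPolynomial (Fin n) K ⧸ J) :=
    AlgEquiv.ofAlgHom Ψ Φ hΨΦ hΦΨ
  have hEtmul : E ((1 : K) ⊗ₜ[k] Ideal.Quotient.mk I g) =
      Ideal.Quotient.mk J (MvPolynomial.map (algebraMap k K) g) := by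
    have hE : E ((1 : K) ⊗ₜ[k] Ideal.Quotient.mk I g) =
        Ψ ((1 : K) ⊗ₜ[k] Ideal.Quotient.mk I g) := rfl
    rw [hE, show Ψ ((1 : K) ⊗ₜ[k] Ideal.Quotient.mk I g) =
        (Algebra.ofId K _) 1 * ψ (Ideal.Quotient.mk I g) from
        Algebra.TensorProduct.lift_tmul _ _ _ _ _]
    rw [map_one, one_mul, hψ]
  rw [aux_adjoin_top_iff (K := K) (Ideal.Quotient.mk I g)]
  have hmap : (Algebra.adjoin K {((1 : K) ⊗ₜ[k] Ideal.Quotient.mk I g : K ⊗[k] Q)}).map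
      E.toAlgHom = Algebra.adjoin K
        {Ideal.Quotient.mk J (MvPolynomial.map (algebraMap k K) g)} := by
    rw [AlgHom.map_adjoin, Set.image_singleton]
    congr 1
    rw [Set.singleton_eq_singleton_iff]
    exact hEtmul
  constructor
  · intro h
    rw [← hmap, h, Algebra.map_top]
    exact (AlgHom.range_eq_top _).2 E.surjective
  · intro h
    have htop : Subalgebra.map E.toAlgHom ⊤ = ⊤ := by
      rw [Algebra.map_top]
      exact (AlgHom.range_eq_top _).2 E.surjective
    exact Subalgebra.map_injective (f := E.toAlgHom) E.injective
      (hmap.trans (h.trans htop.symm))
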